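/- (Positions of the occurrences of envelope words.) For every m ≥ 1 and every p ≥ 0: L(E_{m,1},p+1) = p·2^m − N₁(b,p)·2^{m−1} + 1, and L(E_{m,2},p+1) = (3p+2)·2^{m−1} − N₂(a,p)·2^m + N₂(b,p)·2^{m+1} + 1, where N₁(b,p) is the number of letters b among the first p letters of Θ₁, and N₂(x,p) is the number of letters x among the first p letters of Θ₂. -/

import Mathlib

namespace PD

/-- The period-doubling substitution on the alphabet `Bool`,
where `false` stands for the letter `a` and `true` for the letter `b`:
`σ(a) = ab`, `σ(b) = aa`. -/
def sub : Bool → List Bool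
  | false => [false, true]
  | true  => [false, false]

/-- The substitution applied to a finite word. -/
def subW (w : List Bool) : List Bool := w.flatMap sub

/-- `A m = σ^m(a)`. -/
def A (m : ℕ) : List Bool := subW^[m] [false]

/-- `B m = σ^m(b)`. -/
def B (m : ℕ) : List Bool := subW^[m] [true]

/-- The doubling sequence `D∞` (0-indexed: `D n` is the `(n+1)`-th letter),
the fixed point of `σ` beginning with `a`; `A m` is a prefix of `A (m+1)`,
and `A (n+1)` has length `2^(n+1) > n`. -/
def D (n : ℕ) : Bool := (A (n + 1)).getD n false

/-- `δ m`, the last letter of `A m`. -/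
def delta (m : ℕ) : Bool := (A m).getLastD false

/-- The envelope words (`i ∈ {1,2}`): `E m 1 = A m` minus its last letter,
`E m 2 = A (m-1) ++ (A m` minus its last letter `)`. -/
def E (m i : ℕ) : List Bool :=
  if i = 1 then (A m).dropLast else A (m - 1) ++ (A m).dropLast

/-- `w` occurs at the (1-indexed) position `j` in the finite word `τ`. -/
def OccursIn (w τ : List Bool) (j : ℕ) : Prop :=
  1 ≤ j ∧ (τ.drop (j - 1)).take w.length = w

/-- `w` occurs at the (1-indexed) position `j` in the doubling sequence. -/
def OccursD (w : List Bool) (j : ℕ) : Prop :=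
  1 ≤ j ∧ ∀ k < w.length, D (j - 1 + k) = w.getD k false

/-- `w` is a factor of the doubling sequence. -/
def FactorD (w : List Bool) : Prop := ∃ j, OccursD w j

/-- `L w p`: the (1-indexed) starting position of the `p`-th occurrence of `w`
in the doubling sequence, occurrences being ordered by starting position.
(Each factor occurs infinitely often, so `Nat.nth` enumerates all occurrences
in increasing order.) -/
noncomputable def L (w : List Bool) (p : ℕ) : ℕ := Nat.nth (OccursD w) (p - 1)

/-- The strict total order on envelope words:
`E m₁ i₁ ⊏ E m₂ i₂` iff `m₁ < m₂`, or `m₁ = m₂` and `i₁ < i₂`. -/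
def EnvLt (m₁ i₁ m₂ i₂ : ℕ) : Prop := m₁ < m₂ ∨ (m₁ = m₂ ∧ i₁ < i₂)

/-- `Env(w) = E m i`: the envelope word `E m i` is the `⊏`-minimal envelope
word containing `w` as a factor. -/
def IsEnv (w : List Bool) (m i : ℕ) : Prop :=
  1 ≤ m ∧ (i = 1 ∨ i = 2) ∧ w <:+: E m i ∧
    ∀ m' i', 1 ≤ m' → (i' = 1 ∨ i' = 2) → EnvLt m' i' m i → ¬ w <:+: E m' i'

/-- The substitution `φ₁(a) = a`, `φ₁(b) = bb`. -/
def phi1 : Bool → List Bool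
  | false => [false]
  | true  => [true, true]

/-- `Θ₁ = φ₁(D∞)` (0-indexed): `φ₁(A (n+1))` is a prefix of `Θ₁` of length `> n`. -/
def Theta1 (n : ℕ) : Bool := ((A (n + 1)).flatMap phi1).getD n false

/-- The substitution `φ₂(a) = ab`, `φ₂(b) = acac`, over the alphabet `Fin 3`
where `0` stands for `a`, `1` for `b` and `2` for `c`. -/
def phi2 : Bool → List (Fin 3)
  | false => [0, 1]
  | true  => [0, 2, 0, 2]

/-- `Θ₂ = φ₂(D∞)` (0-indexed). -/
def Theta2 (n : ℕ) : Fin 3 := ((A (n + 1)).flatMap phi2).getD n 0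

/-- `N₁(x,p)`: the number of letters `x` among the first `p` letters of `Θ₁`. -/
def N1 (x : Bool) (p : ℕ) : ℕ := ((List.range p).map Theta1).count x

/-- `N₂(x,p)`: the number of letters `x` among the first `p` letters of `Θ₂`. -/
def N2 (x : Fin 3) (p : ℕ) : ℕ := ((List.range p).map Theta2).count x

end PD

namespace PD






-- Part 1: basics
lemma subW_append (u v : List Bool) : subW (u ++ v) = subW u ++ subW v :=
  List.flatMap_append ..

lemma subW_iter_append (m : ℕ) (u v : List Bool) :
    subW^[m] (u ++ v) = subW^[m] u ++ subW^[m] v := by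
  induction m generalizing u v with
  | zero => simp
  | succ m ih => simp [Function.iterate_succ_apply, subW_append, ih]

lemma A_succ (m : ℕ) : A (m + 1) = A m ++ B m := by
  have : A (m+1) = subW^[m] (subW [false]) := Function.iterate_succ_apply ..
  rw [this]
  show subW^[m] ([false] ++ [true]) = _
  rw [subW_iter_append]; rfl

lemma B_succ (m : ℕ) : B (m + 1) = A m ++ A m := by
  have : B (m+1) = subW^[m] (subW [true]) := Function.iterate_succ_apply ..
  rw [this]
  show subW^[m] ([false] ++ [false]) = _
  rw [subW_iter_append]; rfl

lemma A_succ' (m : ℕ) : A (m + 1) = subW (A m) := Function.iterate_succ_apply' ..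

lemma length_subW (w : List Bool) : (subW w).length = 2 * w.length := by
  induction w with
  | nil => rfl
  | cons x w ih =>
    show (sub x ++ subW w).length = _
    cases x <;> simp [sub, ih] <;> ring

lemma length_A (m : ℕ) : (A m).length = 2 ^ m := by
  induction m with
  | zero => rfl
  | succ m ih => rw [A_succ', length_subW, ih, pow_succ, Nat.mul_comm]

lemma A_prefix_succ (m : ℕ) : A m <+: A (m + 1) := ⟨B m, (A_succ m).symm⟩

lemma A_prefix {m M : ℕ} (h : m ≤ M) : A m <+: A M := by
  induction M with
  | zero => simpa [Nat.le_zero.mp h] using List.prefix_refl _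
  | succ M ih =>
    rcases Nat.lt_or_ge m (M+1) with h' | h'
    · exact (ih (Nat.lt_succ_iff.mp h')).trans (A_prefix_succ M)
    · have : m = M + 1 := le_antisymm h h'
      simp [this]

lemma getD_of_prefix {u v : List Bool} (h : u <+: v) {n : ℕ} (hn : n < u.length) :
    v.getD n false = u.getD n false := by
  rcases h with ⟨w, rfl⟩
  exact List.getD_append _ _ _ _ hn

lemma D_eq_A {n M : ℕ} (h : n < 2 ^ M) : D n = (A M).getD n false := by
  unfold D
  rcases Nat.le_total (n+1) M with h' | h'
  · exact (getD_of_prefix (A_prefix h') (by rw [length_A]; exact (Nat.lt_two_pow_self (n := n)) |>.trans_le (Nat.pow_le_pow_right (by norm_num) (by omega)))).symm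
  · exact getD_of_prefix (A_prefix h') (by rw [length_A]; exact h)

-- getD of subW
lemma subW_getD (w : List Bool) : ∀ k, k < w.length → ∀ r < 2,
    (subW w).getD (2 * k + r) false = (sub (w.getD k false)).getD r false := by
  induction w with
  | nil => intro k hk; simp at hk
  | cons x w ih =>
    intro k hk r hr
    cases k with
    | zero =>
      show (sub x ++ subW w).getD (2*0+r) false = (sub x).getD r false
      rw [Nat.mul_zero, Nat.zero_add, List.getD_append]
      cases x <;> simpa [sub] using hr
    | succ k =>
      show (sub x ++ subW w).getD (2*(k+1)+r) false = _
      have hlen : (sub x).length = 2 := by cases x <;> rfl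
      rw [List.getD_append_right _ _ _ _ (by omega)]
      have : 2*(k+1)+r - (sub x).length = 2*k+r := by omega
      rw [this]
      exact ih k (by simpa using hk) r hr

lemma D_two_mul_add (k r : ℕ) (hr : r < 2) : D (2 * k + r) = (sub (D k)).getD r false := by
  have hk : k < 2 ^ k := (Nat.lt_two_pow_self (n := k))
  have h2 : 2 * k + r < 2 ^ (k + 1) := by
    rw [pow_succ]; omega
  rw [D_eq_A h2, D_eq_A hk, A_succ']
  exact subW_getD (A k) k (by rw [length_A]; exact hk) r hr

lemma D_even (k : ℕ) : D (2 * k) = false := by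
  have := D_two_mul_add k 0 (by norm_num)
  rw [Nat.add_zero] at this
  rw [this]; cases D k <;> rfl

lemma D_odd (k : ℕ) : D (2 * k + 1) = !(D k) := by
  rw [D_two_mul_add k 1 (by norm_num)]
  cases h : D k <;> rfl

-- Part 2: occurrences
def Occ0 (w : List Bool) (s : ℕ) : Prop := ∀ t < w.length, D (s + t) = w.getD t false

lemma sub_getD_zero (x : Bool) : (sub x).getD 0 false = false := by cases x <;> rfl
lemma sub_getD_one (x : Bool) : (sub x).getD 1 false = !x := by cases x <;> rfl

lemma A_getD_zero (m : ℕ) : (A m).getD 0 false = false := by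
  have h : A 0 <+: A m := A_prefix (Nat.zero_le m)
  have := getD_of_prefix h (u := A 0) (n := 0) (by rw [length_A]; norm_num)
  rw [this]; rfl

lemma length_E1 (m : ℕ) : ((A m).dropLast).length = 2 ^ m - 1 := by
  rw [List.length_dropLast, length_A]

lemma E1_ne_nil (m : ℕ) : (A (m+1)).dropLast ≠ [] := by
  have h1 : 1 < 2 ^ (m+1) := Nat.one_lt_two_pow (by omega)
  have : ((A (m+1)).dropLast).length ≠ 0 := by rw [length_E1]; omega
  exact fun hc => this (by rw [hc]; rfl)

lemma E1_getD_zero (m : ℕ) : ((A (m+1)).dropLast).getD 0 false = false := by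
  have h : (A (m+1)).dropLast <+: A (m+1) := List.dropLast_prefix _
  have hl : 0 < ((A (m+1)).dropLast).length := List.length_pos_iff.mpr (E1_ne_nil m)
  rw [← getD_of_prefix h hl, A_getD_zero]

lemma E1_succ (m : ℕ) : (A (m+1)).dropLast = subW ((A m).dropLast) ++ [false] := by
  have hne : A m ≠ [] := by
    have : (A m).length ≠ 0 := by rw [length_A]; positivity
    exact fun hc => this (by rw [hc]; rfl)
  have hA : A m = (A m).dropLast ++ [(A m).getLast hne] := (List.dropLast_append_getLast hne).symm
  rw [A_succ']
  conv_lhs => rw [hA]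
  rw [subW_append]
  rcases Bool.dichotomy ((A m).getLast hne) with h | h
  · rw [h]
    show (subW (A m).dropLast ++ [false, true]).dropLast = _
    rw [show (subW (A m).dropLast ++ [false, true]) = (subW (A m).dropLast ++ [false]) ++ [true] by simp,
      List.dropLast_concat]
  · rw [h]
    show (subW (A m).dropLast ++ [false, false]).dropLast = _
    rw [show (subW (A m).dropLast ++ [false, false]) = (subW (A m).dropLast ++ [false]) ++ [false] by simp,
      List.dropLast_concat]

lemma occ_subW (w : List Bool) (hne : w ≠ []) (h0 : w.getD 0 false = false) (s : ℕ) :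
    Occ0 (subW w ++ [false]) s ↔ ∃ t, s = 2 * t ∧ Occ0 w t := by
  have hlw : 1 ≤ w.length := List.length_pos_iff.mpr hne
  have hlen : (subW w ++ [false]).length = 2 * w.length + 1 := by
    simp [length_subW]
  have getD_big : ∀ i < w.length, ∀ r < 2,
      (subW w ++ [false]).getD (2*i+r) false = (sub (w.getD i false)).getD r false := by
    intro i hi r hr
    rw [List.getD_append _ _ _ _ (by rw [length_subW]; omega)]
    exact subW_getD w i hi r hr
  have getD_last : (subW w ++ [false]).getD (2 * w.length) false = false := by
    rw [List.getD_append_right _ _ _ _ (by rw [length_subW])]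
    rw [length_subW]; simp
  constructor
  · intro h
    -- s is even
    have h1 : D (s + 1) = true := by
      have h1' := h 1 (by omega)
      have e1 := getD_big 0 hlw 1 (by omega)
      rw [show (2*0+1) = 1 by norm_num] at e1
      rw [h1', e1, h0, sub_getD_one]
      rfl
    have hs : ∃ t, s = 2 * t := by
      rcases Nat.even_or_odd s with ⟨t, ht⟩ | ⟨t, ht⟩
      · exact ⟨t, by omega⟩
      · exfalso
        have : D (s+1) = false := by
          rw [show s + 1 = 2 * (t+1) by omega]; exact D_even _
        rw [h1] at this; simp at this
    rcases hs with ⟨t, rfl⟩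
    refine ⟨t, rfl, fun i hi => ?_⟩
    have := h (2*i+1) (by omega)
    rw [getD_big i hi 1 (by omega), sub_getD_one] at this
    rw [show 2*t + (2*i+1) = 2*(t+i)+1 by ring, D_odd] at this
    exact Bool.not_inj this
  · rintro ⟨t, rfl, ht⟩
    intro u hu
    rw [hlen] at hu
    rcases Nat.even_or_odd u with ⟨i, hui⟩ | ⟨i, hui⟩
    · rcases Nat.lt_or_ge i w.length with hi | hi
      · rw [show u = 2*i+0 by omega, getD_big i hi 0 (by omega), sub_getD_zero,
          show 2*t + (2*i+0) = 2*(t+i) by ring, D_even]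
      · have : u = 2 * w.length := by omega
        rw [this, getD_last, show 2*t + 2*w.length = 2*(t+w.length) by ring, D_even]
    · have hi : i < w.length := by omega
      rw [show u = 2*i+1 by omega, getD_big i hi 1 (by omega), sub_getD_one,
        show 2*t + (2*i+1) = 2*(t+i)+1 by ring, D_odd, ht i hi]

lemma occ_E1 (n : ℕ) (s : ℕ) :
    Occ0 ((A (n+1)).dropLast) s ↔
      ∃ k, s = k * 2 ^ (n+1) ∨ (s = k * 2 ^ (n+1) + 2 ^ n ∧ D k = true) := by
  induction n generalizing s with
  | zero =>
    have hA1 : (A 1).dropLast = [false] := rfl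
    rw [hA1]
    constructor
    · intro h
      have hD : D s = false := by simpa using h 0 (by norm_num)
      rcases Nat.even_or_odd s with ⟨k, hk⟩ | ⟨k, hk⟩
      · exact ⟨k, Or.inl (by omega)⟩
      · refine ⟨k, Or.inr ⟨by omega, ?_⟩⟩
        have := D_odd k
        rw [show 2*k+1 = s by omega, hD] at this
        exact Bool.not_inj (by rw [← this]; rfl)
    · rintro ⟨k, hk | ⟨hk, hDk⟩⟩ t ht
      · have ht0 : t = 0 := by simp at ht; omega
        subst ht0
        show D (s + 0) = [false].getD 0 false
        rw [Nat.add_zero, hk, show k * 2^(0+1) = 2 * k by ring, D_even]; rfl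
      · have ht0 : t = 0 := by simp at ht; omega
        subst ht0
        show D (s + 0) = [false].getD 0 false
        rw [Nat.add_zero, hk, show k * 2^(0+1) + 2^0 = 2 * k + 1 by ring, D_odd, hDk]
        rfl
  | succ n ih =>
    rw [E1_succ, occ_subW _ (E1_ne_nil _) (E1_getD_zero _)]
    constructor
    · rintro ⟨t, rfl, ht⟩
      rcases (ih t).mp ht with ⟨k, hk | ⟨hk, hDk⟩⟩
      · exact ⟨k, Or.inl (by rw [hk]; ring)⟩
      · exact ⟨k, Or.inr ⟨by rw [hk]; ring, hDk⟩⟩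
    · rintro ⟨k, hk | ⟨hk, hDk⟩⟩
      · refine ⟨k * 2^(n+1), by rw [hk]; ring, (ih _).mpr ⟨k, Or.inl rfl⟩⟩
      · refine ⟨k * 2^(n+1) + 2^n, by rw [hk]; ring, (ih _).mpr ⟨k, Or.inr ⟨rfl, hDk⟩⟩⟩


-- Part 3: E m 2
lemma E2_getD_zero (n : ℕ) : (A n ++ (A (n+1)).dropLast).getD 0 false = false := by
  rw [List.getD_append _ _ _ _ (by rw [length_A]; positivity), A_getD_zero]

lemma E2_ne_nil (n : ℕ) : A n ++ (A (n+1)).dropLast ≠ [] := by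
  intro hc
  have := congrArg List.length hc
  rw [List.length_append, length_A] at this
  simp at this

lemma E2_succ (n : ℕ) :
    A (n+1) ++ (A (n+2)).dropLast = subW (A n ++ (A (n+1)).dropLast) ++ [false] := by
  rw [subW_append, E1_succ, A_succ', List.append_assoc]

lemma occ_E2 (n : ℕ) (s : ℕ) :
    Occ0 (A n ++ (A (n+1)).dropLast) s ↔
      ∃ k, D k = true ∧ (s = k * 2 ^ (n+1) ∨ s = k * 2 ^ (n+1) + 2 ^ n) := by
  induction n generalizing s with
  | zero =>
    have hW : A 0 ++ (A 1).dropLast = [false, false] := rfl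
    rw [hW]
    constructor
    · intro h
      have h0 : D (s + 0) = false := h 0 (by norm_num)
      have h1 : D (s + 1) = false := h 1 (by norm_num)
      rw [Nat.add_zero] at h0
      rcases Nat.even_or_odd s with ⟨t, ht⟩ | ⟨t, ht⟩
      · refine ⟨t, ?_, Or.inl (by omega)⟩
        have := D_odd t
        rw [show 2*t+1 = s+1 by omega, h1] at this
        exact Bool.not_inj (by rw [← this]; rfl)
      · refine ⟨t, ?_, Or.inr (by omega)⟩
        have := D_odd t
        rw [show 2*t+1 = s by omega, h0] at this
        exact Bool.not_inj (by rw [← this]; rfl)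
    · rintro ⟨k, hDk, hk | hk⟩ t ht
      · have : t = 0 ∨ t = 1 := by simp at ht; omega
        rcases this with rfl | rfl
        · show D (s+0) = false
          rw [Nat.add_zero, hk, show k * 2^(0+1) = 2*k by ring, D_even]
        · show D (s+1) = false
          rw [hk, show k * 2^(0+1) + 1 = 2*k+1 by ring, D_odd, hDk]; rfl
      · have : t = 0 ∨ t = 1 := by simp at ht; omega
        rcases this with rfl | rfl
        · show D (s+0) = false
          rw [Nat.add_zero, hk, show k * 2^(0+1) + 2^0 = 2*k+1 by ring, D_odd, hDk]; rfl
        · show D (s+1) = false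
          rw [hk, show k * 2^(0+1) + 2^0 + 1 = 2*(k+1) by ring, D_even]
  | succ n ih =>
    rw [E2_succ, occ_subW _ (E2_ne_nil n) (E2_getD_zero n)]
    constructor
    · rintro ⟨t, rfl, ht⟩
      rcases (ih t).mp ht with ⟨k, hDk, hk | hk⟩
      · exact ⟨k, hDk, Or.inl (by rw [hk]; ring)⟩
      · exact ⟨k, hDk, Or.inr (by rw [hk]; ring)⟩
    · rintro ⟨k, hDk, hk | hk⟩
      · exact ⟨k * 2^(n+1), by rw [hk]; ring, (ih _).mpr ⟨k, hDk, Or.inl rfl⟩⟩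
      · exact ⟨k * 2^(n+1) + 2^n, by rw [hk]; ring, (ih _).mpr ⟨k, hDk, Or.inr rfl⟩⟩


-- Part 4: generic flatMap indexing
section Generic
variable {α β : Type*} (g : α → List β) (d : α) (e : β)

lemma getD_of_prefix' {u v : List β} (h : u <+: v) {n : ℕ} (hn : n < u.length) :
    v.getD n e = u.getD n e := by
  rcases h with ⟨w, rfl⟩
  exact List.getD_append _ _ _ _ hn

lemma flatMap_getD : ∀ (w : List α) (k : ℕ), k < w.length → ∀ r < (g (w.getD k d)).length,
    (w.flatMap g).getD (((w.take k).map (fun x => (g x).length)).sum + r) e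
      = (g (w.getD k d)).getD r e := by
  intro w
  induction w with
  | nil => intro k hk; simp at hk
  | cons x w ih =>
    intro k hk r hr
    cases k with
    | zero =>
      show ((g x ++ w.flatMap g)).getD (0 + r) e = _
      rw [Nat.zero_add]
      exact List.getD_append _ _ _ _ (by exact hr)
    | succ k =>
      rw [List.take_succ_cons, List.map_cons, List.sum_cons, List.flatMap_cons, Nat.add_assoc,
        List.getD_append_right _ _ _ _ (Nat.le_add_right _ _), Nat.add_sub_cancel_left,
        List.getD_cons_succ]
      exact ih k (by simpa using hk) r hr

lemma length_flatMap_ge (hg : ∀ x, 1 ≤ (g x).length) :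
    ∀ w : List α, w.length ≤ (w.flatMap g).length := by
  intro w
  induction w with
  | nil => simp
  | cons x w ih =>
    rw [List.flatMap_cons, List.length_append, List.length_cons]
    have := hg x
    omega

lemma take_map_sum (f : α → ℕ) : ∀ (l : List α) (k : ℕ), k ≤ l.length →
    ((l.take k).map f).sum = ∑ j ∈ Finset.range k, f (l.getD j d) := by
  intro l k
  induction k with
  | zero => simp
  | succ k ih =>
    intro hk
    rw [List.take_succ, List.map_append, List.sum_append, ih (by omega), Finset.sum_range_succ]
    rw [List.getElem?_eq_getElem (by omega), List.getD_eq_getElem l d (by omega)]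
    simp

end Generic

-- Part 4b: Theta1


lemma phi1_len_pos (x : Bool) : 1 ≤ (phi1 x).length := by cases x <;> simp [phi1]

lemma phi1_len_le (x : Bool) : (phi1 x).length ≤ 2 := by cases x <;> simp [phi1]

lemma flatMap_prefix {γ : Type*} {u v : List Bool} {g : Bool → List γ} (h : u <+: v) :
    u.flatMap g <+: v.flatMap g := by
  rcases h with ⟨w, rfl⟩
  exact ⟨w.flatMap g, (List.flatMap_append ..).symm⟩

lemma Theta1_eq {n M : ℕ} (h : n < 2 ^ M) :
    Theta1 n = ((A M).flatMap phi1).getD n false := by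
  unfold Theta1
  rcases Nat.le_total (n+1) M with h' | h'
  · refine (getD_of_prefix' false (flatMap_prefix (A_prefix h')) ?_).symm
    calc n < 2^(n+1) := (Nat.lt_two_pow_self (n := n+1)) |> fun _ => Nat.lt_of_lt_of_le ((Nat.lt_two_pow_self (n := n))) (Nat.pow_le_pow_right (by norm_num) (by omega))
    _ ≤ ((A (n+1)).flatMap phi1).length := by
        rw [← length_A]; exact length_flatMap_ge _ phi1_len_pos _
  · refine getD_of_prefix' false (flatMap_prefix (A_prefix h')) ?_
    calc n < 2^M := h
    _ ≤ ((A M).flatMap phi1).length := by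
        rw [← length_A]; exact length_flatMap_ge _ phi1_len_pos _

def t1 (k : ℕ) : ℕ := ∑ j ∈ Finset.range k, (phi1 (D j)).length

lemma t1_succ (k : ℕ) : t1 (k+1) = t1 k + (phi1 (D k)).length := Finset.sum_range_succ ..

lemma Theta1_block (k : ℕ) (r : ℕ) (hr : r < (phi1 (D k)).length) :
    Theta1 (t1 k + r) = (phi1 (D k)).getD r false := by
  set M := t1 k + r + k + 1 with hM
  have hself : ∀ a : ℕ, a < 2 ^ a := fun a => Nat.lt_two_pow_self
  have hmono : ∀ a b : ℕ, a ≤ b → (2:ℕ)^a ≤ 2^b := fun a b h => Nat.pow_le_pow_right (by norm_num) h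
  have hkM : k < 2 ^ M := lt_of_lt_of_le (hself k) (hmono _ _ (by omega))
  have hnM : t1 k + r < 2 ^ M := lt_of_lt_of_le (hself (t1 k + r)) (hmono _ _ (by omega))
  rw [Theta1_eq hnM]
  have hsum : ((( A M).take k).map (fun x => (phi1 x).length)).sum = t1 k := by
    rw [take_map_sum (d := false) (f := fun x => (phi1 x).length) (A M) k
      (by rw [length_A]; exact hkM.le)]
    exact Finset.sum_congr rfl fun j hj => by
      rw [← D_eq_A (lt_of_lt_of_le (Finset.mem_range.mp hj) hkM.le)]
  have := flatMap_getD phi1 false false (A M) k (by rw [length_A]; exact hkM) r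
    (by rw [← D_eq_A hkM]; exact hr)
  rw [hsum, ← D_eq_A hkM] at this
  exact this


-- Part 4c: c1 and its range
def g1 : Bool → ℕ
  | false => 2
  | true  => 1

def c1 (p : ℕ) : ℕ := ∑ i ∈ Finset.range p, g1 (Theta1 i)

lemma c1_succ (p : ℕ) : c1 (p+1) = c1 p + g1 (Theta1 p) := Finset.sum_range_succ ..

lemma pos_decomp1 (p : ℕ) : ∃ k r, r < (phi1 (D k)).length ∧ p = t1 k + r := by
  induction p with
  | zero => exact ⟨0, 0, phi1_len_pos _, by simp [t1]⟩
  | succ p ih =>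
    obtain ⟨k, r, hr, rfl⟩ := ih
    by_cases h : r + 1 < (phi1 (D k)).length
    · exact ⟨k, r+1, h, by ring⟩
    · refine ⟨k+1, 0, phi1_len_pos _, ?_⟩
      rw [t1_succ]; omega

lemma Theta1_t1 (k : ℕ) : Theta1 (t1 k) = (phi1 (D k)).getD 0 false := by
  have := Theta1_block k 0 (phi1_len_pos _)
  rwa [Nat.add_zero] at this

lemma c1_t1 (k : ℕ) : c1 (t1 k) = 2 * k := by
  induction k with
  | zero => simp [c1, t1]
  | succ k ih =>
    rw [t1_succ]
    cases hD : D k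
    · show c1 (t1 k + (phi1 false).length) = _
      show c1 (t1 k + 1) = _
      rw [c1_succ, ih, Theta1_t1, hD]
      rfl
    · show c1 (t1 k + (phi1 true).length) = _
      show c1 (t1 k + 2) = _
      have h1 : Theta1 (t1 k + 1) = (phi1 (D k)).getD 1 false :=
        Theta1_block k 1 (by rw [hD]; simp [phi1])
      rw [show t1 k + 2 = (t1 k + 1) + 1 by ring, c1_succ, c1_succ, ih,
        Theta1_t1, h1, hD]
      rfl

lemma c1_range (n : ℕ) :
    (∃ p, c1 p = n) ↔ ∃ k, n = 2*k ∨ (n = 2*k+1 ∧ D k = true) := by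
  constructor
  · rintro ⟨p, rfl⟩
    obtain ⟨k, r, hr, rfl⟩ := pos_decomp1 p
    cases hD : D k
    · rw [hD] at hr
      have : r = 0 := by simpa [phi1] using hr
      subst this
      exact ⟨k, Or.inl (by rw [Nat.add_zero, c1_t1])⟩
    · rw [hD] at hr
      have : r = 0 ∨ r = 1 := by simp [phi1] at hr; omega
      rcases this with rfl | rfl
      · exact ⟨k, Or.inl (by rw [Nat.add_zero, c1_t1])⟩
      · refine ⟨k, Or.inr ⟨?_, hD⟩⟩
        rw [show t1 k + 1 = t1 k + 1 from rfl, c1_succ, c1_t1, Theta1_t1, hD]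
        rfl
  · rintro ⟨k, rfl | ⟨rfl, hD⟩⟩
    · exact ⟨t1 k, c1_t1 k⟩
    · refine ⟨t1 k + 1, ?_⟩
      rw [c1_succ, c1_t1, Theta1_t1, hD]
      rfl

lemma c1_strictMono : StrictMono c1 := by
  apply strictMono_nat_of_lt_succ
  intro p
  rw [c1_succ]
  have : 1 ≤ g1 (Theta1 p) := by cases Theta1 p <;> simp [g1]
  omega


lemma c1_N1 (p : ℕ) : c1 p + N1 true p = 2 * p := by
  induction p with
  | zero => simp [c1, N1]
  | succ p ih =>
    have hN : N1 true (p+1) = N1 true p + (if Theta1 p = true then 1 else 0) := by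
      rw [N1, List.range_succ, List.map_append, List.count_append, ← N1]
      congr 1
      cases h : Theta1 p <;> simp [h]
    rw [c1_succ, hN]
    cases h : Theta1 p <;> simp [h, g1] <;> omega


-- Part 4d: Theta2 / c2


lemma phi2_len_pos (x : Bool) : 1 ≤ (phi2 x).length := by cases x <;> simp [phi2]

lemma Theta2_eq {n M : ℕ} (h : n < 2 ^ M) :
    Theta2 n = ((A M).flatMap phi2).getD n 0 := by
  unfold Theta2
  rcases Nat.le_total (n+1) M with h' | h'
  · refine (getD_of_prefix' 0 (flatMap_prefix (A_prefix h')) ?_).symm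
    calc n < 2^(n+1) := Nat.lt_of_lt_of_le ((Nat.lt_two_pow_self (n := n))) (Nat.pow_le_pow_right (by norm_num) (by omega))
    _ ≤ ((A (n+1)).flatMap phi2).length := by
        rw [← length_A]; exact length_flatMap_ge _ phi2_len_pos _
  · refine getD_of_prefix' 0 (flatMap_prefix (A_prefix h')) ?_
    calc n < 2^M := h
    _ ≤ ((A M).flatMap phi2).length := by
        rw [← length_A]; exact length_flatMap_ge _ phi2_len_pos _

def t2 (k : ℕ) : ℕ := ∑ j ∈ Finset.range k, (phi2 (D j)).length

lemma t2_succ (k : ℕ) : t2 (k+1) = t2 k + (phi2 (D k)).length := Finset.sum_range_succ ..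

lemma Theta2_block (k : ℕ) (r : ℕ) (hr : r < (phi2 (D k)).length) :
    Theta2 (t2 k + r) = (phi2 (D k)).getD r 0 := by
  set M := t2 k + r + k + 1 with hM
  have hself : ∀ a : ℕ, a < 2 ^ a := fun a => Nat.lt_two_pow_self
  have hmono : ∀ a b : ℕ, a ≤ b → (2:ℕ)^a ≤ 2^b := fun a b h => Nat.pow_le_pow_right (by norm_num) h
  have hkM : k < 2 ^ M := lt_of_lt_of_le (hself k) (hmono _ _ (by omega))
  have hnM : t2 k + r < 2 ^ M := lt_of_lt_of_le (hself (t2 k + r)) (hmono _ _ (by omega))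
  rw [Theta2_eq hnM]
  have hsum : ((( A M).take k).map (fun x => (phi2 x).length)).sum = t2 k := by
    rw [take_map_sum (d := false) (f := fun x => (phi2 x).length) (A M) k
      (by rw [length_A]; exact hkM.le)]
    exact Finset.sum_congr rfl fun j hj => by
      rw [← D_eq_A (lt_of_lt_of_le (Finset.mem_range.mp hj) hkM.le)]
  have := flatMap_getD phi2 false 0 (A M) k (by rw [length_A]; exact hkM) r
    (by rw [← D_eq_A hkM]; exact hr)
  rw [hsum, ← D_eq_A hkM] at this
  exact this

lemma Theta2_t2 (k : ℕ) : Theta2 (t2 k) = (phi2 (D k)).getD 0 0 := by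
  have := Theta2_block k 0 (phi2_len_pos _)
  rwa [Nat.add_zero] at this

def g2 : Fin 3 → ℕ
  | 0 => 1
  | 1 => 7
  | 2 => 3

def c2 (p : ℕ) : ℕ := ∑ i ∈ Finset.range p, g2 (Theta2 i)

lemma c2_succ (p : ℕ) : c2 (p+1) = c2 p + g2 (Theta2 p) := Finset.sum_range_succ ..

lemma pos_decomp2 (p : ℕ) : ∃ k r, r < (phi2 (D k)).length ∧ p = t2 k + r := by
  induction p with
  | zero => exact ⟨0, 0, phi2_len_pos _, by simp [t2]⟩
  | succ p ih =>
    obtain ⟨k, r, hr, rfl⟩ := ih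
    by_cases h : r + 1 < (phi2 (D k)).length
    · exact ⟨k, r+1, h, by ring⟩
    · refine ⟨k+1, 0, phi2_len_pos _, ?_⟩
      rw [t2_succ]; omega

lemma c2_t2 (k : ℕ) : c2 (t2 k) = 8 * k := by
  induction k with
  | zero => simp [c2, t2]
  | succ k ih =>
    rw [t2_succ]
    cases hD : D k
    · show c2 (t2 k + (phi2 false).length) = _
      show c2 (t2 k + 2) = _
      have h1 : Theta2 (t2 k + 1) = (phi2 (D k)).getD 1 0 :=
        Theta2_block k 1 (by rw [hD]; simp [phi2])
      rw [show t2 k + 2 = (t2 k + 1) + 1 by ring, c2_succ, c2_succ, ih,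
        Theta2_t2, h1, hD]
      rfl
    · show c2 (t2 k + (phi2 true).length) = _
      show c2 (t2 k + 4) = _
      have h1 : Theta2 (t2 k + 1) = (phi2 (D k)).getD 1 0 :=
        Theta2_block k 1 (by rw [hD]; simp [phi2])
      have h2 : Theta2 (t2 k + 2) = (phi2 (D k)).getD 2 0 :=
        Theta2_block k 2 (by rw [hD]; simp [phi2])
      have h3 : Theta2 (t2 k + 3) = (phi2 (D k)).getD 3 0 :=
        Theta2_block k 3 (by rw [hD]; simp [phi2])
      rw [show t2 k + 4 = (((t2 k + 1) + 1) + 1) + 1 by ring, c2_succ, c2_succ, c2_succ, c2_succ, ih,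
        show t2 k + 1 + 1 + 1 = t2 k + 3 by ring, show t2 k + 1 + 1 = t2 k + 2 by ring,
        Theta2_t2, h1, h2, h3, hD]
      rfl

lemma D_4k1 (k : ℕ) : D (4*k+1) = true := by
  have := D_odd (2*k)
  rw [D_even] at this
  rw [show 4*k+1 = 2*(2*k)+1 by ring, this]
  rfl

lemma D_4k3 (k : ℕ) : D (4*k+3) = D k := by
  have h := D_odd (2*k+1)
  have h2 := D_odd k
  rw [h2] at h
  rw [show 4*k+3 = 2*(2*k+1)+1 by ring, h, Bool.not_not]

-- partial values of c2 inside a block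
lemma c2_mid_false (k : ℕ) (hD : D k = false) : c2 (t2 k + 1) = 8*k + 1 := by
  rw [c2_succ, c2_t2, Theta2_t2, hD]
  rfl

lemma c2_mid_true (k : ℕ) (hD : D k = true) :
    c2 (t2 k + 1) = 8*k + 1 ∧ c2 (t2 k + 2) = 8*k + 4 ∧ c2 (t2 k + 3) = 8*k + 5 := by
  have h1 : Theta2 (t2 k + 1) = (phi2 (D k)).getD 1 0 :=
    Theta2_block k 1 (by rw [hD]; simp [phi2])
  have h2 : Theta2 (t2 k + 2) = (phi2 (D k)).getD 2 0 :=
    Theta2_block k 2 (by rw [hD]; simp [phi2])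
  have e1 : c2 (t2 k + 1) = 8*k + 1 := by
    rw [c2_succ, c2_t2, Theta2_t2, hD]; rfl
  have e2 : c2 (t2 k + 2) = 8*k + 4 := by
    rw [show t2 k + 2 = (t2 k + 1) + 1 by ring, c2_succ, e1, h1, hD]; rfl
  have e3 : c2 (t2 k + 3) = 8*k + 5 := by
    rw [show t2 k + 3 = (t2 k + 2) + 1 by ring, c2_succ, e2, h2, hD]; rfl
  exact ⟨e1, e2, e3⟩

lemma c2_range (n : ℕ) :
    (∃ p, c2 p + 2 = n) ↔ ∃ j, D j = true ∧ (n = 2*j ∨ n = 2*j + 1) := by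
  constructor
  · rintro ⟨p, rfl⟩
    obtain ⟨k, r, hr, rfl⟩ := pos_decomp2 p
    cases hD : D k
    · rw [hD] at hr
      have : r = 0 ∨ r = 1 := by simp [phi2] at hr; omega
      rcases this with rfl | rfl
      · exact ⟨4*k+1, D_4k1 k, Or.inl (by simp only [Nat.add_zero]; rw [c2_t2]; ring)⟩
      · exact ⟨4*k+1, D_4k1 k, Or.inr (by rw [c2_mid_false k hD]; ring)⟩
    · rw [hD] at hr
      obtain ⟨e1, e2, e3⟩ := c2_mid_true k hD
      have : r = 0 ∨ r = 1 ∨ r = 2 ∨ r = 3 := by simp [phi2] at hr; omega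
      rcases this with rfl | rfl | rfl | rfl
      · exact ⟨4*k+1, D_4k1 k, Or.inl (by simp only [Nat.add_zero]; rw [c2_t2]; ring)⟩
      · exact ⟨4*k+1, D_4k1 k, Or.inr (by rw [e1]; ring)⟩
      · exact ⟨4*k+3, by rw [D_4k3, hD], Or.inl (by rw [e2]; ring)⟩
      · exact ⟨4*k+3, by rw [D_4k3, hD], Or.inr (by rw [e3]; ring)⟩
  · rintro ⟨j, hDj, hn⟩
    have hodd : ∃ i, j = 2*i + 1 := by
      rcases Nat.even_or_odd j with ⟨i, hi⟩ | ⟨i, hi⟩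
      · exfalso
        rw [hi, show i + i = 2*i by ring, D_even] at hDj
        simp at hDj
      · exact ⟨i, hi⟩
    obtain ⟨i, rfl⟩ := hodd
    rcases Nat.even_or_odd i with ⟨k, hk⟩ | ⟨k, hk⟩
    · -- j = 4k+1
      have hj : 2*i+1 = 4*k+1 := by omega
      rcases hn with rfl | rfl
      · exact ⟨t2 k, by rw [c2_t2, hj]; ring⟩
      · refine ⟨t2 k + 1, ?_⟩
        cases hD : D k
        · rw [c2_mid_false k hD, hj]; ring
        · rw [(c2_mid_true k hD).1, hj]; ring
    · -- j = 4k+3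
      have hj : 2*i+1 = 4*k+3 := by omega
      have hDk : D k = true := by rw [← D_4k3 k, ← hj]; exact hDj
      obtain ⟨e1, e2, e3⟩ := c2_mid_true k hDk
      rcases hn with rfl | rfl
      · exact ⟨t2 k + 2, by rw [e2, hj]; ring⟩
      · exact ⟨t2 k + 3, by rw [e3, hj]; ring⟩

lemma c2_strictMono : StrictMono c2 := by
  apply strictMono_nat_of_lt_succ
  intro p
  rw [c2_succ]
  have : 1 ≤ g2 (Theta2 p) := by
    have : ∀ x : Fin 3, 1 ≤ g2 x := by decide
    exact this _
  omega


lemma c2_N2 (p : ℕ) : c2 p + 2 * N2 0 p = 3 * p + 4 * N2 1 p := by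
  induction p with
  | zero => simp [c2, N2]
  | succ p ih =>
    have hN : ∀ x : Fin 3, N2 x (p+1) = N2 x p + (if Theta2 p = x then 1 else 0) := by
      intro x
      rw [N2, List.range_succ, List.map_append, List.count_append, ← N2]
      congr 1
      by_cases h : Theta2 p = x
      · simp [h]
      · rw [if_neg h, List.count_eq_zero]
        intro hc
        exact h (List.mem_singleton.mp hc).symm
    have h3 : ∀ x : Fin 3, x = 0 ∨ x = 1 ∨ x = 2 := by decide
    rw [c2_succ, hN 0, hN 1]
    rcases h3 (Theta2 p) with h | h | h <;> rw [h] <;> simp [g2] <;> omega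


-- Part 5: Nat.nth of a strictly monotone enumeration
lemma nth_eq_of_strictMono {P : ℕ → Prop} {f : ℕ → ℕ} (hf : StrictMono f)
    (h1 : ∀ n, P (f n)) (h2 : ∀ j, P j → ∃ n, f n = j) (n : ℕ) : Nat.nth P n = f n := by
  classical
  have hc : Nat.count P (f n) = n := by
    rw [Nat.count_eq_card_filter_range]
    have himg : (Finset.range (f n)).filter P = (Finset.range n).image f := by
      ext j
      simp only [Finset.mem_filter, Finset.mem_range, Finset.mem_image]
      constructor
      · rintro ⟨hj, hPj⟩
        obtain ⟨i, rfl⟩ := h2 j hPj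
        exact ⟨i, hf.lt_iff_lt.mp hj, rfl⟩
      · rintro ⟨i, hi, rfl⟩
        exact ⟨hf hi, h1 i⟩
    rw [himg, Finset.card_image_of_injective _ hf.injective, Finset.card_range]
  have := Nat.nth_count (p := P) (h1 n)
  rwa [hc] at this




lemma occursD_iff (w : List Bool) (j : ℕ) : OccursD w j ↔ 1 ≤ j ∧ Occ0 w (j - 1) :=
  Iff.rfl

lemma nth_E1 (n p : ℕ) : Nat.nth (OccursD (E (n+1) 1)) p = 2^n * c1 p + 1 := by
  have hE : E (n+1) 1 = (A (n+1)).dropLast := by simp [E]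
  rw [hE]
  refine nth_eq_of_strictMono (f := fun p => 2^n * c1 p + 1) ?_ ?_ ?_ p
  · intro a b hab
    exact Nat.add_lt_add_right (mul_lt_mul_of_pos_left (c1_strictMono hab) (by positivity)) 1
  · intro q
    rw [occursD_iff]
    refine ⟨Nat.le_add_left 1 _, ?_⟩
    show Occ0 _ (2^n * c1 q + 1 - 1)
    have h1 : 2^n * c1 q + 1 - 1 = 2^n * c1 q := by omega
    rw [h1, occ_E1]
    obtain ⟨k, hk | ⟨hk, hDk⟩⟩ := (c1_range (c1 q)).mp ⟨q, rfl⟩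
    · exact ⟨k, Or.inl (by rw [hk]; ring)⟩
    · exact ⟨k, Or.inr ⟨by rw [hk]; ring, hDk⟩⟩
  · intro j hj
    rw [occursD_iff] at hj
    obtain ⟨hj1, hocc⟩ := hj
    obtain ⟨k, hk | ⟨hk, hDk⟩⟩ := (occ_E1 n (j-1)).mp hocc
    · obtain ⟨q, hq⟩ := (c1_range (2*k)).mpr ⟨k, Or.inl rfl⟩
      refine ⟨q, ?_⟩
      have hjj : j = k * 2^(n+1) + 1 := by
        rw [(Nat.sub_eq_iff_eq_add hj1).mp hk]
      show 2^n * c1 q + 1 = j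
      rw [hq, hjj]; ring
    · obtain ⟨q, hq⟩ := (c1_range (2*k+1)).mpr ⟨k, Or.inr ⟨rfl, hDk⟩⟩
      refine ⟨q, ?_⟩
      have hjj : j = k * 2^(n+1) + 2^n + 1 := by
        rw [(Nat.sub_eq_iff_eq_add hj1).mp hk]
      show 2^n * c1 q + 1 = j
      rw [hq, hjj]; ring

lemma nth_E2 (n p : ℕ) : Nat.nth (OccursD (E (n+1) 2)) p = 2^n * (c2 p + 2) + 1 := by
  have hE : E (n+1) 2 = A n ++ (A (n+1)).dropLast := by simp [E]
  rw [hE]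
  refine nth_eq_of_strictMono (f := fun p => 2^n * (c2 p + 2) + 1) ?_ ?_ ?_ p
  · intro a b hab
    refine Nat.add_lt_add_right (mul_lt_mul_of_pos_left ?_ (by positivity)) 1
    have := c2_strictMono hab
    omega
  · intro q
    rw [occursD_iff]
    refine ⟨Nat.le_add_left 1 _, ?_⟩
    show Occ0 _ (2^n * (c2 q + 2) + 1 - 1)
    have h1 : 2^n * (c2 q + 2) + 1 - 1 = 2^n * (c2 q + 2) := by omega
    rw [h1, occ_E2]
    obtain ⟨k, hDk, hk | hk⟩ := (c2_range (c2 q + 2)).mp ⟨q, rfl⟩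
    · exact ⟨k, hDk, Or.inl (by rw [hk]; ring)⟩
    · exact ⟨k, hDk, Or.inr (by rw [hk]; ring)⟩
  · intro j hj
    rw [occursD_iff] at hj
    obtain ⟨hj1, hocc⟩ := hj
    obtain ⟨k, hDk, hk | hk⟩ := (occ_E2 n (j-1)).mp hocc
    · obtain ⟨q, hq⟩ := (c2_range (2*k)).mpr ⟨k, hDk, Or.inl rfl⟩
      refine ⟨q, ?_⟩
      have hjj : j = k * 2^(n+1) + 1 := by
        rw [(Nat.sub_eq_iff_eq_add hj1).mp hk]
      show 2^n * (c2 q + 2) + 1 = j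
      rw [hq, hjj]; ring
    · obtain ⟨q, hq⟩ := (c2_range (2*k+1)).mpr ⟨k, hDk, Or.inr rfl⟩
      refine ⟨q, ?_⟩
      have hjj : j = k * 2^(n+1) + 2^n + 1 := by
        rw [(Nat.sub_eq_iff_eq_add hj1).mp hk]
      show 2^n * (c2 q + 2) + 1 = j
      rw [hq, hjj]; ring

end PD

open PD
/-- Positions of the occurrences of envelope words: for every `m ≥ 1` and `p ≥ 0`,
`L(E m 1, p+1) = p·2^m − N₁(b,p)·2^(m-1) + 1` and
`L(E m 2, p+1) = (3p+2)·2^(m-1) − N₂(a,p)·2^m + N₂(b,p)·2^(m+1) + 1`. -/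
theorem doubling_positions_formula (m : ℕ) (hm : 1 ≤ m) (p : ℕ) :
    (L (E m 1) (p + 1) : ℤ)
        = (p : ℤ) * 2 ^ m - (N1 true p : ℤ) * 2 ^ (m - 1) + 1 ∧
      (L (E m 2) (p + 1) : ℤ)
        = (3 * (p : ℤ) + 2) * 2 ^ (m - 1) - (N2 0 p : ℤ) * 2 ^ m
            + (N2 1 p : ℤ) * 2 ^ (m + 1) + 1 := by
  obtain ⟨n, rfl⟩ : ∃ n, m = n + 1 := ⟨m - 1, by omega⟩
  have hsub : n + 1 - 1 = n := by omega
  constructor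
  · rw [L, Nat.add_sub_cancel, nth_E1 n p, hsub]
    have hc : (c1 p : ℤ) = 2 * p - N1 true p := by
      have h := congrArg (Nat.cast : ℕ → ℤ) (c1_N1 p)
      push_cast at h
      omega
    push_cast
    rw [hc]
    ring
  · rw [L, Nat.add_sub_cancel, nth_E2 n p, hsub]
    have hc : (c2 p : ℤ) = 3 * p + 4 * N2 1 p - 2 * N2 0 p := by
      have := c2_N2 p
      have := congrArg (Nat.cast : ℕ → ℤ) this
      push_cast at this
      omega
    push_cast
    rw [hc]
    ring
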